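/- The Hultman number S_H(n,k), defined as the number of n-permutations p with c(G(p)) = k, equals the number of (n+1)-cycles q in S_{n+1} such that the product (1 2 ... n (n+1))·q has exactly k cycles. -/

import Mathlib

open Equiv

/-- The setoid on `α` whose classes are the cycles (orbits) of the permutation `p`. -/
def Equiv.Perm.sameCycleSetoid {α : Type*} (p : Equiv.Perm α) : Setoid α :=
  ⟨p.SameCycle, Equiv.Perm.SameCycle.refl p, fun h => h.symm, fun h h' => h.trans h'⟩

/-- The number of cycles (orbits, including fixed points) of a permutation. -/
noncomputable def numCycles {α : Type*} (p : Equiv.Perm α) : ℕ :=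
  Nat.card (Quotient p.sameCycleSetoid)

/-- `p` is a full cycle (an `n`-cycle on an `n`-element set): all points lie on one cycle. -/
def IsFullCycle {α : Type*} (p : Equiv.Perm α) : Prop := ∀ i j, p.SameCycle i j

/-- Extension of a permutation of `{1,…,n}` (modelled on `Fin n`) to `{0,1,…,n}`
(modelled on `Fin (n+1)`), fixing `0`:  `i+1 ↦ p i + 1`. -/
noncomputable def extShift {n : ℕ} (p : Equiv.Perm (Fin n)) : Equiv.Perm (Fin (n + 1)) :=
  p.viaFintypeEmbedding (Fin.succEmb n)

/-- The permutation of `{0,1,…,n}` whose cycles are exactly the alternating cycles of the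
cycle graph `G(p)`: following the black edge ending at `p̂(i-1)` and the gray edge to
`p̂(i-1)+1`, the next black edge is the one indexed by `p̂⁻¹(p̂(i-1)+1)` (arithmetic mod `n+1`,
with `p̂ = extShift p` the extension of `p` fixing `0`). -/
noncomputable def cycleGraphPerm {n : ℕ} (p : Equiv.Perm (Fin n)) : Equiv.Perm (Fin (n + 1)) :=
  (extShift p)⁻¹ * Equiv.addRight 1 * extShift p * (Equiv.addRight (1 : Fin (n + 1)))⁻¹

/-- `c(G(p))`: the number of alternating cycles of the cycle graph of `p`. -/
noncomputable def cG {n : ℕ} (p : Equiv.Perm (Fin n)) : ℕ :=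
  numCycles (cycleGraphPerm p)

/-- The Hultman number `S_H(n,k)`: the number of `n`-permutations `p` with `c(G(p)) = k`. -/
noncomputable def hultman (n k : ℕ) : ℕ :=
  Nat.card {p : Equiv.Perm (Fin n) // cG p = k}

/-- **Doignon–Labarre.**  The Hultman number `S_H(n,k)` equals the number of `(n+1)`-cycles
`q` in `S_{n+1}` such that the product of the long cycle `(1 2 … (n+1))` (modelled by
`finRotate (n+1)`) with `q` has exactly `k` cycles. -/
lemma numCycles_inv {α : Type*} (p : Equiv.Perm α) : numCycles p⁻¹ = numCycles p := by
  have h : p⁻¹.sameCycleSetoid = p.sameCycleSetoid :=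
    Setoid.ext fun x y => Equiv.Perm.sameCycle_inv
  unfold numCycles
  rw [h]

open Fin.NatCast in
lemma addRight_pow_apply {n : ℕ} (m : ℕ) (a : Fin (n + 1)) :
    ((Equiv.addRight (1 : Fin (n + 1))) ^ m) a = a + (m : Fin (n + 1)) := by
  induction m with
  | zero => simp
  | succ m ih =>
    rw [pow_succ', Equiv.Perm.mul_apply, Equiv.coe_addRight, ih]
    push_cast
    abel

lemma isFullCycle_addRight {n : ℕ} : IsFullCycle (Equiv.addRight (1 : Fin (n + 1))) := by
  intro i j
  refine ⟨((j - i).val : ℤ), ?_⟩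
  rw [zpow_natCast, addRight_pow_apply, Fin.cast_val_eq_self]
  abel

lemma extShift_apply_succ {n : ℕ} (p : Equiv.Perm (Fin n)) (i : Fin n) :
    extShift p i.succ = (p i).succ :=
  p.viaFintypeEmbedding_apply_image (Fin.succEmb n) i

lemma extShift_apply_zero {n : ℕ} (p : Equiv.Perm (Fin n)) : extShift p 0 = 0 := by
  refine p.viaFintypeEmbedding_apply_notMem_range (Fin.succEmb n) ?_
  rintro ⟨i, hi⟩
  exact Fin.succ_ne_zero i hi

lemma extShift_injective {n : ℕ} : Function.Injective (extShift (n := n)) := by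
  intro p q h
  ext i
  have h2 : extShift p i.succ = extShift q i.succ := by rw [h]
  rw [extShift_apply_succ, extShift_apply_succ] at h2
  exact congrArg Fin.val (Fin.succ_injective _ h2)

section FullCycle
variable {n : ℕ} {q : Equiv.Perm (Fin (n + 1))}

lemma fullCycle_pow_eq_one_of_fix (hq : IsFullCycle q) {c : ℕ} (h : (q ^ c) 0 = 0) :
    q ^ c = 1 := by
  have hz : (q ^ (c : ℤ)) 0 = 0 := by rwa [zpow_natCast]
  suffices hs : q ^ (c : ℤ) = 1 by rwa [zpow_natCast] at hs
  refine Equiv.ext fun x => ?_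
  obtain ⟨m, hm⟩ := hq 0 x
  have hcomm : q ^ (c : ℤ) * q ^ m = q ^ m * q ^ (c : ℤ) :=
    ((Commute.refl q).zpow_zpow (c : ℤ) m).eq
  calc (q ^ (c : ℤ)) x = (q ^ (c : ℤ)) ((q ^ m) 0) := by rw [hm]
    _ = (q ^ m) ((q ^ (c : ℤ)) 0) := by
        rw [← Equiv.Perm.mul_apply, hcomm, Equiv.Perm.mul_apply]
    _ = x := by rw [hz, hm]

lemma fullCycle_aux (hq : IsFullCycle q) {c : ℕ} (hc : c ≤ n) (h : (q ^ c) 0 = 0) : c = 0 := by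
  by_contra hc0
  have h1 : q ^ c = 1 := fullCycle_pow_eq_one_of_fix hq h
  have hcpos : 0 < c := Nat.pos_of_ne_zero hc0
  have hsurj : Function.Surjective (fun a : Fin c => (q ^ (a : ℕ)) (0 : Fin (n + 1))) := by
    intro x
    obtain ⟨m, hm⟩ := hq 0 x
    have hcz : (0 : ℤ) < (c : ℤ) := by exact_mod_cast hcpos
    have hmod : 0 ≤ m % c := Int.emod_nonneg m (by omega)
    have hlt : m % c < c := Int.emod_lt_of_pos m hcz
    have hltn : (m % c).toNat < c := by omega
    refine ⟨⟨(m % c).toNat, hltn⟩, ?_⟩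
    have hpow : q ^ (((m % c).toNat : ℕ) : ℤ) = q ^ m := by
      rw [Int.toNat_of_nonneg hmod]
      conv_rhs => rw [← Int.emod_add_mul_ediv m c]
      rw [zpow_add, zpow_mul, zpow_natCast, h1, one_zpow, mul_one]
    show (q ^ ((m % c).toNat : ℕ)) 0 = x
    rw [← zpow_natCast, hpow, hm]
  have hcard := Fintype.card_le_of_surjective _ hsurj
  simp only [Fintype.card_fin] at hcard
  omega

lemma fullCycle_pow_zero_inj (hq : IsFullCycle q) {a b : ℕ} (ha : a ≤ n) (hb : b ≤ n)
    (h : (q ^ a) 0 = (q ^ b) 0) : a = b := by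
  wlog hab : a ≤ b generalizing a b
  · exact (this hb ha h.symm (le_of_not_ge hab)).symm
  have key : (q ^ (b - a)) 0 = 0 := by
    have h2 : (q ^ a) ((q ^ (b - a)) 0) = (q ^ a) 0 := by
      rw [← Equiv.Perm.mul_apply, ← pow_add, Nat.add_sub_cancel' hab, ← h]
    exact (q ^ a).injective h2
  have := fullCycle_aux hq (by omega) key
  omega

lemma fullCycle_pow_card (hq : IsFullCycle q) : q ^ (n + 1) = 1 := by
  apply fullCycle_pow_eq_one_of_fix hq
  have hinj : Function.Injective (fun a : Fin (n + 1) => (q ^ (a : ℕ)) (0 : Fin (n + 1))) := by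
    intro a b hab
    exact Fin.ext (fullCycle_pow_zero_inj hq (Nat.lt_succ_iff.mp a.isLt)
      (Nat.lt_succ_iff.mp b.isLt) hab)
  obtain ⟨a, ha⟩ := (Finite.injective_iff_surjective.mp hinj) ((q ^ (n + 1)) 0)
  have key : (q ^ (n + 1 - (a : ℕ))) 0 = 0 := by
    have h2 : (q ^ (a : ℕ)) ((q ^ (n + 1 - (a : ℕ))) 0) = (q ^ (a : ℕ)) 0 := by
      rw [← Equiv.Perm.mul_apply, ← pow_add, Nat.add_sub_cancel' (by omega : (a : ℕ) ≤ n + 1)]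
      exact ha.symm
    exact (q ^ (a : ℕ)).injective h2
  rcases Nat.eq_zero_or_pos (a : ℕ) with h0 | hpos
  · have : (q ^ ((a : ℕ))) (0 : Fin (n+1)) = 0 := by rw [h0]; simp
    rw [← ha]
    simpa using this
  · have hle : n + 1 - (a : ℕ) ≤ n := by omega
    have := fullCycle_aux hq hle key
    omega

end FullCycle

lemma exists_extShift {n : ℕ} (σ : Equiv.Perm (Fin (n + 1))) (h0 : σ 0 = 0) :
    ∃ p, extShift p = σ := by
  have hne : ∀ i : Fin n, σ i.succ ≠ 0 := fun i h =>
    Fin.succ_ne_zero i (σ.injective (h.trans h0.symm))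
  set g : Fin n → Fin n := fun i => (σ i.succ).pred (hne i) with hgdef
  have hg : Function.Injective g := by
    intro a b hab
    apply Fin.succ_injective
    apply σ.injective
    have h2 := congrArg Fin.succ hab
    rwa [hgdef, Fin.succ_pred, Fin.succ_pred] at h2
  refine ⟨Equiv.ofBijective g (Finite.injective_iff_bijective.mp hg), Equiv.ext fun x => ?_⟩
  refine Fin.cases ?_ (fun i => ?_) x
  · rw [extShift_apply_zero, h0]
  · rw [extShift_apply_succ]
    show (g i).succ = σ i.succ
    rw [hgdef, Fin.succ_pred]

theorem hultman_eq_card_cycles (n k : ℕ) :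
    hultman n k =
      Nat.card {q : Equiv.Perm (Fin (n + 1)) //
        IsFullCycle q ∧ numCycles (finRotate (n + 1) * q) = k} := by
  have hfr : finRotate (n + 1) = Equiv.addRight (1 : Fin (n + 1)) :=
    Equiv.ext fun i => by rw [finRotate_succ_apply, Equiv.coe_addRight]
  have hfull : ∀ p : Equiv.Perm (Fin n),
      IsFullCycle ((extShift p)⁻¹ * (Equiv.addRight (1 : Fin (n + 1)))⁻¹ * extShift p) := by
    intro p i j
    have h1 : (extShift p)⁻¹ * (Equiv.addRight (1 : Fin (n + 1)))⁻¹ * extShift p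
        = (extShift p)⁻¹ * (Equiv.addRight (1 : Fin (n + 1)))⁻¹ * ((extShift p)⁻¹)⁻¹ := by
      rw [inv_inv]
    rw [h1, Equiv.Perm.sameCycle_conj]
    exact (isFullCycle_addRight _ _).inv
  have hnum : ∀ p : Equiv.Perm (Fin n),
      numCycles (finRotate (n + 1) *
        ((extShift p)⁻¹ * (Equiv.addRight (1 : Fin (n + 1)))⁻¹ * extShift p)) = cG p := by
    intro p
    have h2 : finRotate (n + 1) *
        ((extShift p)⁻¹ * (Equiv.addRight (1 : Fin (n + 1)))⁻¹ * extShift p)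
        = (cycleGraphPerm p)⁻¹ := by
      rw [hfr]; unfold cycleGraphPerm; group
    rw [h2, numCycles_inv]; rfl
  set F : {p : Equiv.Perm (Fin n) // cG p = k} →
      {q : Equiv.Perm (Fin (n + 1)) //
        IsFullCycle q ∧ numCycles (finRotate (n + 1) * q) = k} :=
    fun p => ⟨(extShift p.1)⁻¹ * (Equiv.addRight (1 : Fin (n + 1)))⁻¹ * extShift p.1,
      hfull p.1, by rw [hnum]; exact p.2⟩ with hF
  have hinj : Function.Injective F := by
    intro p₁ p₂ h
    have he : (extShift p₁.1)⁻¹ * (Equiv.addRight (1 : Fin (n + 1)))⁻¹ * extShift p₁.1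
        = (extShift p₂.1)⁻¹ * (Equiv.addRight (1 : Fin (n + 1)))⁻¹ * extShift p₂.1 :=
      congrArg Subtype.val h
    set σ₁ := extShift p₁.1 with hσ₁
    set σ₂ := extShift p₂.1 with hσ₂
    set r : Equiv.Perm (Fin (n + 1)) := Equiv.addRight 1 with hrdef
    have he' : σ₁⁻¹ * r * σ₁ = σ₂⁻¹ * r * σ₂ := by
      have h3 := congrArg (·⁻¹) he
      simpa [mul_inv_rev, mul_assoc] using h3
    have hδ : (σ₂ * σ₁⁻¹) * r = r * (σ₂ * σ₁⁻¹) := by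
      calc (σ₂ * σ₁⁻¹) * r = σ₂ * (σ₁⁻¹ * r * σ₁) * σ₁⁻¹ := by group
        _ = σ₂ * (σ₂⁻¹ * r * σ₂) * σ₁⁻¹ := by rw [he']
        _ = r * (σ₂ * σ₁⁻¹) := by group
    have hδ0 : (σ₂ * σ₁⁻¹) 0 = 0 := by
      rw [Equiv.Perm.mul_apply]
      have h10 : σ₁⁻¹ 0 = 0 := by
        conv_lhs => rw [← extShift_apply_zero p₁.1, ← hσ₁]
        exact σ₁.symm_apply_apply 0
      rw [h10, hσ₂, extShift_apply_zero]
    have hδ1 : σ₂ * σ₁⁻¹ = 1 := by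
      refine Equiv.ext fun i => ?_
      have hcomm := (Commute.pow_right hδ (i : ℕ)).symm
      calc (σ₂ * σ₁⁻¹) i = (σ₂ * σ₁⁻¹) ((r ^ (i : ℕ)) 0) := by
            rw [hrdef, addRight_pow_apply, zero_add, Fin.cast_val_eq_self]
        _ = ((σ₂ * σ₁⁻¹) * r ^ (i : ℕ)) 0 := rfl
        _ = (r ^ (i : ℕ) * (σ₂ * σ₁⁻¹)) 0 := by rw [hcomm]
        _ = (r ^ (i : ℕ)) 0 := by rw [Equiv.Perm.mul_apply, hδ0]
        _ = (1 : Equiv.Perm (Fin (n + 1))) i := by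
            rw [hrdef, addRight_pow_apply, zero_add, Fin.cast_val_eq_self,
              Equiv.Perm.one_apply]
    have hσeq : σ₂ = σ₁ := mul_inv_eq_one.mp hδ1
    exact Subtype.ext (extShift_injective (hσ₁ ▸ hσ₂ ▸ hσeq).symm)
  have hsurj : Function.Surjective F := by
    rintro ⟨q, hqfull, hqnum⟩
    set r : Equiv.Perm (Fin (n + 1)) := Equiv.addRight 1 with hrdef
    have hqifull : IsFullCycle q⁻¹ := fun i j => (hqfull i j).inv
    set f : Fin (n + 1) → Fin (n + 1) := fun i => ((q⁻¹) ^ (i : ℕ)) 0 with hfdef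
    have hfinj : Function.Injective f := fun a b hab =>
      Fin.ext (fullCycle_pow_zero_inj hqifull (Nat.lt_succ_iff.mp a.isLt)
        (Nat.lt_succ_iff.mp b.isLt) hab)
    set τ : Equiv.Perm (Fin (n + 1)) :=
      Equiv.ofBijective f (Finite.injective_iff_bijective.mp hfinj) with hτdef
    have hτ0 : τ 0 = 0 := by
      show f 0 = 0
      simp [hfdef]; rfl
    have hq1 : q ^ (n + 1) = 1 := fullCycle_pow_card hqfull
    have hqin : (q⁻¹) ^ n = q := by
      have h1 : (q⁻¹) ^ (n + 1) = 1 := by rw [inv_pow, hq1, inv_one]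
      have h2 : (q⁻¹) ^ n * q⁻¹ = 1 := by rw [← pow_succ]; exact h1
      exact mul_inv_eq_one.mp h2
    have hconj : q * τ = τ * r⁻¹ := by
      refine Equiv.ext fun i => ?_
      show q (τ i) = τ (r⁻¹ i)
      have hrinv : r⁻¹ i = i - 1 := by
        rw [Equiv.Perm.inv_eq_iff_eq]
        show i = (i - 1) + 1
        rw [sub_add_cancel]
      rw [hrinv]
      rcases eq_or_ne i 0 with h0 | h0
      · subst h0
        rw [hτ0, zero_sub]
        show q 0 = (q⁻¹ ^ ((-1 : Fin (n + 1)) : ℕ)) 0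
        rw [Fin.coe_neg_one, hqin]
      · show q (f i) = f (i - 1)
        have hvne : (i : ℕ) ≠ 0 := fun hc => h0 (Fin.ext hc)
        obtain ⟨m, hm⟩ : ∃ m, (i : ℕ) = m + 1 := ⟨(i : ℕ) - 1, by omega⟩
        have hval : ((i - 1 : Fin (n + 1)) : ℕ) = m := by
          rw [Fin.coe_sub_one, if_neg h0]
          omega
        show q ((q⁻¹ ^ (i : ℕ)) 0) = (q⁻¹ ^ ((i - 1 : Fin (n + 1)) : ℕ)) 0
        rw [hval, hm, pow_succ', Equiv.Perm.mul_apply, ← Equiv.Perm.mul_apply, mul_inv_cancel,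
          Equiv.Perm.one_apply]
    have hσ0 : τ⁻¹ 0 = 0 := by
      conv_lhs => rw [← hτ0]
      exact τ.symm_apply_apply 0
    obtain ⟨p, hp⟩ := exists_extShift τ⁻¹ hσ0
    have hqeq : q = (τ⁻¹)⁻¹ * r⁻¹ * τ⁻¹ := by
      rw [inv_inv, ← hconj, mul_inv_cancel_right]
    have hcg : cG p = k := by
      have h1 : finRotate (n + 1) * q = (cycleGraphPerm p)⁻¹ := by
        rw [hfr, hqeq]
        unfold cycleGraphPerm
        rw [hp, ← hrdef]
        group
      rw [show cG p = numCycles (cycleGraphPerm p) from rfl, ← numCycles_inv, ← h1, hqnum]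
    refine ⟨⟨p, hcg⟩, Subtype.ext ?_⟩
    show (extShift p)⁻¹ * (Equiv.addRight (1 : Fin (n + 1)))⁻¹ * extShift p = q
    rw [hp, ← hrdef, ← hqeq]
  unfold hultman
  exact Nat.card_congr (Equiv.ofBijective F ⟨hinj, hsurj⟩)
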